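/- For fixed P₁, P₂ > 0 and R_c, R_s ∈ ℝ with 0 < R_c² + R_s² < P₁P₂, the function h(σ₁,σ₂,ρ,φ) = −2 ln(σ₁²σ₂²(1−ρ²)) − (1/(1−ρ²))(P₁/σ₁² + P₂/σ₂² − 2ρ(R_c cos φ + R_s sin φ)/(σ₁σ₂)), defined for σ₁ > 0, σ₂ > 0, 0 ≤ ρ < 1, φ ∈ ℝ, attains its maximum at σ₁ = √(P₁/2), σ₂ = √(P₂/2), ρ = √((R_c²+R_s²)/(P₁P₂)), cos φ = R_c/√(R_c²+R_s²), sin φ = R_s/√(R_c²+R_s²). -/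

import Mathlib

open Real

noncomputable def hML (P₁ P₂ Rc Rs σ₁ σ₂ ρ φ : ℝ) : ℝ :=
  -2 * Real.log (σ₁^2 * σ₂^2 * (1 - ρ^2))
    - (1/(1 - ρ^2)) * (P₁/σ₁^2 + P₂/σ₂^2
        - 2*ρ*(Rc*Real.cos φ + Rs*Real.sin φ)/(σ₁*σ₂))

lemma hML_aux_M (Rc Rs R c s : ℝ) (hR0 : 0 < R) (hR2 : R^2 = Rc^2 + Rs^2)
    (hcs : s^2 + c^2 = 1) : Rc*c + Rs*s ≤ R := by
  nlinarith [sq_nonneg (Rc*s - Rs*c), sq_nonneg (Rc*c + Rs*s - R)]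

lemma hML_aux_key (a b σ₁ σ₂ : ℝ) : 2*(a*b)*(σ₁*σ₂) ≤ a^2*σ₂^2 + b^2*σ₁^2 := by
  nlinarith [sq_nonneg (a*σ₂ - b*σ₁)]

lemma hML_aux_e (ρ : ℝ) (h0 : 0 ≤ ρ) (h1 : ρ < 1) : 0 < 1 - ρ^2 := by nlinarith

lemma hML_aux_C (ρ R S : ℝ) : (1-ρ^2)*(S^2-R^2) ≤ (S - ρ*R)^2 := by
  nlinarith [sq_nonneg (R - ρ*S)]

set_option maxHeartbeats 1600000

theorem hML_max (P₁ P₂ Rc Rs : ℝ) (hP₁ : 0 < P₁) (hP₂ : 0 < P₂)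
    (hR : 0 < Rc^2 + Rs^2) (hRP : Rc^2 + Rs^2 < P₁*P₂) :
    ∀ φ₀ : ℝ, Real.cos φ₀ = Rc / Real.sqrt (Rc^2 + Rs^2) →
      Real.sin φ₀ = Rs / Real.sqrt (Rc^2 + Rs^2) →
      ∀ σ₁ σ₂ ρ φ : ℝ, 0 < σ₁ → 0 < σ₂ → 0 ≤ ρ → ρ < 1 →
        hML P₁ P₂ Rc Rs σ₁ σ₂ ρ φ ≤
          hML P₁ P₂ Rc Rs (Real.sqrt (P₁/2)) (Real.sqrt (P₂/2))
            (Real.sqrt ((Rc^2 + Rs^2)/(P₁*P₂))) φ₀ := by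
  intro φ₀ hcos hsin σ₁ σ₂ ρ φ hσ₁ hσ₂ hρ0 hρ1
  have hP : 0 < P₁ * P₂ := mul_pos hP₁ hP₂
  set R : ℝ := Real.sqrt (Rc^2 + Rs^2) with hRdef
  have hR0 : 0 < R := Real.sqrt_pos.2 hR
  have hR2 : R^2 = Rc^2 + Rs^2 := Real.sq_sqrt hR.le
  set S : ℝ := Real.sqrt (P₁*P₂) with hSdef
  have hS0 : 0 < S := Real.sqrt_pos.2 hP
  have hS2 : S^2 = P₁*P₂ := Real.sq_sqrt hP.le
  have hSab : S = Real.sqrt P₁ * Real.sqrt P₂ := by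
    rw [hSdef]; exact Real.sqrt_mul hP₁.le P₂
  have hRS : R < S := by
    rw [hRdef, hSdef]; exact Real.sqrt_lt_sqrt (by positivity) hRP
  have hρs : Real.sqrt ((Rc^2 + Rs^2)/(P₁*P₂)) = R/S := by
    rw [Real.sqrt_div hR.le, ← hRdef, ← hSdef]
  have hprod : Real.sqrt (P₁/2) * Real.sqrt (P₂/2) = S/2 := by
    rw [← Real.sqrt_mul (by positivity)]
    rw [show P₁/2*(P₂/2) = (P₁*P₂)*(1/4) by ring, Real.sqrt_mul hP.le,
      show (1/4:ℝ) = (1/2)^2 by norm_num, Real.sqrt_sq (by norm_num), ← hSdef]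
    ring
  clear_value R S
  set D : ℝ := P₁*P₂ - (Rc^2+Rs^2) with hDdef
  have hD : 0 < D := by rw [hDdef]; linarith
  clear_value D
  -- values at the candidate maximizer
  have hs1 : Real.sqrt (P₁/2) ^ 2 = P₁/2 := Real.sq_sqrt (by positivity)
  have hs2 : Real.sqrt (P₂/2) ^ 2 = P₂/2 := Real.sq_sqrt (by positivity)
  have hM0 : Rc*Real.cos φ₀ + Rs*Real.sin φ₀ = R := by
    rw [hcos, hsin, show Rc*(Rc/R) + Rs*(Rs/R) = (Rc^2+Rs^2)/R by ring, ← hR2, sq,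
      mul_div_assoc, div_self hR0.ne', mul_one]
  have hRHS : hML P₁ P₂ Rc Rs (Real.sqrt (P₁/2)) (Real.sqrt (P₂/2))
      (Real.sqrt ((Rc^2 + Rs^2)/(P₁*P₂))) φ₀ = -2 * Real.log (D/4) - 4 := by
    unfold hML
    rw [hρs, hM0, hs1, hs2, hprod]
    have h1 : 1 - (R/S)^2 = D/(P₁*P₂) := by
      rw [hDdef]
      field_simp
      rw [hR2, hS2]; ring
    rw [h1]
    have harg : P₁/2 * (P₂/2) * (D/(P₁*P₂)) = D/4 := by
      field_simp; ring
    rw [harg]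
    have h2 : (1/(D/(P₁*P₂))) * (P₁/(P₁/2) + P₂/(P₂/2) - 2*(R/S)*R/(S/2)) = 4 := by
      have hRS2 : 2*(R/S)*R/(S/2) = 4*(Rc^2+Rs^2)/(P₁*P₂) := by
        rw [show 2*(R/S)*R/(S/2) = 4*R^2/S^2 by field_simp; ring, hR2, hS2]
      have hx : P₁/(P₁/2) = 2 := by field_simp
      have hy : P₂/(P₂/2) = 2 := by field_simp
      have hD' : P₁*P₂ - (Rc^2+Rs^2) ≠ 0 := by
        rw [← hDdef]; exact hD.ne'
      rw [hRS2, hx, hy, one_div_div, hDdef]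
      field_simp
      ring
    rw [h2]
  rw [hRHS]
  -- notation
  set u : ℝ := σ₁ * σ₂ with hudef
  have hu : 0 < u := mul_pos hσ₁ hσ₂
  set e : ℝ := 1 - ρ^2 with hedef
  have he : 0 < e := by rw [hedef]; exact hML_aux_e ρ hρ0 hρ1
  set A : ℝ := S - ρ*R with hAdef
  have hA : 0 < A := by
    have h : ρ*R ≤ R := mul_le_of_le_one_left hR0.le hρ1.le
    rw [hAdef]; linarith
  -- Step A : bound the φ term and apply AM-GM to the σ terms
  have hM : Rc*Real.cos φ + Rs*Real.sin φ ≤ R :=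
    hML_aux_M Rc Rs R (Real.cos φ) (Real.sin φ) hR0 hR2 (Real.sin_sq_add_cos_sq φ)
  have key : 2*S*u ≤ P₁*σ₂^2 + P₂*σ₁^2 := by
    have h := hML_aux_key (Real.sqrt P₁) (Real.sqrt P₂) σ₁ σ₂
    rw [Real.sq_sqrt hP₁.le, Real.sq_sqrt hP₂.le] at h
    rw [hSab, hudef]
    linarith
  have main : 2*A/u ≤ P₁/σ₁^2 + P₂/σ₂^2 - 2*ρ*(Rc*Real.cos φ + Rs*Real.sin φ)/u := by
    have e1 : P₁/σ₁^2 + P₂/σ₂^2 - 2*ρ*(Rc*Real.cos φ + Rs*Real.sin φ)/u - 2*A/u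
        = (P₁*σ₂^2 + P₂*σ₁^2 - 2*ρ*(Rc*Real.cos φ + Rs*Real.sin φ)*u - 2*A*u)/u^2 := by
      rw [hudef]
      field_simp
    have t1 : 0 ≤ 2*ρ*u*(R - (Rc*Real.cos φ + Rs*Real.sin φ)) :=
      mul_nonneg (mul_nonneg (mul_nonneg (by norm_num) hρ0) hu.le) (sub_nonneg.2 hM)
    have e2 : 0 ≤ P₁*σ₂^2 + P₂*σ₁^2 - 2*ρ*(Rc*Real.cos φ + Rs*Real.sin φ)*u - 2*A*u := by
      rw [hAdef]
      nlinarith [key, t1]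
    have e3 := div_nonneg e2 (sq_nonneg u)
    linarith [e1.ge.trans_eq' rfl, e1 ▸ e3]
  have stepA : hML P₁ P₂ Rc Rs σ₁ σ₂ ρ φ ≤ -2*Real.log (u^2*e) - 2*A/(u*e) := by
    unfold hML
    have harg : σ₁^2*σ₂^2*(1-ρ^2) = u^2*e := by rw [hudef, hedef]; ring
    rw [harg, ← hedef, ← hudef]
    have h3 : 2*A/(u*e) ≤ (1/e) * (P₁/σ₁^2 + P₂/σ₂^2
        - 2*ρ*(Rc*Real.cos φ + Rs*Real.sin φ)/u) := by
      have hm := mul_le_mul_of_nonneg_left main (le_of_lt (one_div_pos.2 he))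
      calc 2*A/(u*e) = (1/e) * (2*A/u) := by field_simp
        _ ≤ _ := hm
    linarith
  -- Step B : optimize over u via log x ≤ x - 1
  have hB : -2*Real.log (u^2*e) - 2*A/(u*e) ≤ -2*Real.log e - 4*Real.log (A/(2*e)) - 4 := by
    have hlogsplit : Real.log (u^2*e) = 2*Real.log u + Real.log e := by
      rw [Real.log_mul (pow_ne_zero 2 hu.ne') he.ne', Real.log_pow]
      push_cast; ring
    have ht : 0 < A/(2*e) := div_pos hA (by linarith)
    have hlog := Real.log_le_sub_one_of_pos (div_pos ht hu)
    have hlogdiv : Real.log (A/(2*e)/u) = Real.log (A/(2*e)) - Real.log u :=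
      Real.log_div ht.ne' hu.ne'
    rw [hlogdiv] at hlog
    have hval2 : 2*A/(u*e) = 4*(A/(2*e)/u) := by field_simp; ring
    rw [hlogsplit, hval2]
    linarith [hlog]
  -- Step C : optimize over ρ
  have hC : -2*Real.log e - 4*Real.log (A/(2*e)) - 4 ≤ -2*Real.log (D/4) - 4 := by
    have hlogA : Real.log (A/(2*e)) = Real.log A - Real.log 2 - Real.log e := by
      rw [show A/(2*e) = A/2/e from (div_div A 2 e).symm, Real.log_div (by positivity) he.ne',
        Real.log_div hA.ne' (by norm_num)]
    have hlogD : Real.log (D/4) = Real.log D - 2*Real.log 2 := by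
      rw [Real.log_div hD.ne' (by norm_num), show (4:ℝ) = 2^2 by norm_num, Real.log_pow]
      push_cast; ring
    have hineq : e*D ≤ A^2 := by
      have hDS : D = S^2 - R^2 := by rw [hDdef, hS2, hR2]
      rw [hedef, hAdef, hDS]
      exact hML_aux_C ρ R S
    have hlogineq : Real.log e + Real.log D ≤ 2*Real.log A := by
      have h1 : Real.log (e*D) ≤ Real.log (A^2) :=
        Real.log_le_log (mul_pos he hD) hineq
      rw [Real.log_mul he.ne' hD.ne', Real.log_pow] at h1
      push_cast at h1; linarith
    rw [hlogA, hlogD]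
    linarith
  linarith [stepA, hB, hC]
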